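/- Assume in addition u ≠ 0. For all 0 ≤ t ≤ r ≤ T, with G(s) = ωs − log(1 + u·e^{−2ω(T−s)}), one has ∫_t^r e^{G(s)}·f₁(s,r,T) ds = −(1/2)·( (e^{ω(2T−r)}/u) − e^{ωr} )/(1 + u·e^{−2ω(T−r)}) − (1/2)·( e^{ωr} − (e^{ω(2T−r)}/u) )/(1 + u·e^{−2ω(T−t)}). -/

import Mathlib

/-- Assume `u ≠ 0`. For all `0 ≤ t ≤ r ≤ T`, with `G(s) = ωs − log(1 + u·e^{−2ω(T−s)})`,
`∫_t^r e^{G(s)}·f₁(s,r,T) ds = −(1/2)·((e^{ω(2T−r)}/u) − e^{ωr})/(1 + u·e^{−2ω(T−r)})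
  − (1/2)·(e^{ωr} − (e^{ω(2T−r)}/u))/(1 + u·e^{−2ω(T−t)})`. -/
theorem stmt_7 (α β γ T : ℝ) (hα : 0 < α) (hβ : 0 < β) (hγ : 0 < γ) (hT : 0 < T)
    (ω u : ℝ) (hω : ω = Real.sqrt (β / α))
    (hu : u = (Real.sqrt (α * β) - γ) / (Real.sqrt (α * β) + γ)) (hu0 : u ≠ 0)
    (f₁ : ℝ → ℝ → ℝ)
    (hf₁ : ∀ t s, f₁ t s = ω * (Real.exp (-ω * (s - t)) - u * Real.exp (-ω * (2 * T - s - t))) /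
      (1 + u * Real.exp (-2 * ω * (T - t))))
    (G : ℝ → ℝ)
    (hG : ∀ s, G s = ω * s - Real.log (1 + u * Real.exp (-2 * ω * (T - s)))) :
    ∀ t r, 0 ≤ t → t ≤ r → r ≤ T →
      (∫ s in t..r, Real.exp (G s) * f₁ s r) =
        -(1 / 2) * (Real.exp (ω * (2 * T - r)) / u - Real.exp (ω * r)) /
            (1 + u * Real.exp (-2 * ω * (T - r))) -
          (1 / 2) * (Real.exp (ω * r) - Real.exp (ω * (2 * T - r)) / u) /
            (1 + u * Real.exp (-2 * ω * (T - t))) := by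
  intro t r ht htr hrT
  have hω0 : 0 ≤ ω := hω ▸ Real.sqrt_nonneg _
  have hsq : 0 < Real.sqrt (α * β) := Real.sqrt_pos.2 (mul_pos hα hβ)
  have hden : 0 < Real.sqrt (α * β) + γ := by linarith
  have hu1 : -1 < u := by
    rw [hu, lt_div_iff₀ hden]; linarith
  have hu1' : u < 1 := by
    rw [hu, div_lt_one hden]; linarith
  set D : ℝ → ℝ := fun s => 1 + u * Real.exp (-2 * ω * (T - s)) with hD
  have hDpos : ∀ s, s ≤ T → 0 < D s := by
    intro s hs
    have he : 0 < Real.exp (-2 * ω * (T - s)) := Real.exp_pos _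
    have he1 : Real.exp (-2 * ω * (T - s)) ≤ 1 := by
      apply Real.exp_le_one_iff.2
      nlinarith
    simp only [hD]
    nlinarith [mul_pos (show (0:ℝ) < 1 + u by linarith) he]
  set c : ℝ := (1/2) * (Real.exp (ω * r) - Real.exp (ω * (2 * T - r)) / u) with hc
  have hmem : ∀ s ∈ Set.uIcc t r, t ≤ s ∧ s ≤ r := by
    intro s hs
    rw [Set.uIcc_of_le htr] at hs
    exact ⟨hs.1, hs.2⟩
  have hderiv : ∀ s ∈ Set.uIcc t r,
      HasDerivAt (fun x => c / D x) (Real.exp (G s) * f₁ s r) s := by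
    intro s hs
    obtain ⟨hts, hsr⟩ := hmem s hs
    have hsT : s ≤ T := le_trans hsr hrT
    have hDs : 0 < D s := hDpos s hsT
    have h1 : HasDerivAt (fun x : ℝ => -2 * ω * (T - x)) (2 * ω) s := by
      have := ((hasDerivAt_id s).const_sub T).const_mul (-2 * ω)
      refine this.congr_deriv ?_; ring
    have h2 : HasDerivAt D (u * (Real.exp (-2 * ω * (T - s)) * (2 * ω))) s := by
      simpa [hD, mul_assoc] using (h1.exp.const_mul u).const_add 1
    have h3 := (hasDerivAt_const s c).div h2 (ne_of_gt hDs)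
    refine h3.congr_deriv (Eq.symm ?_)
    rw [hG, hf₁, Real.exp_sub, Real.exp_log hDs]
    simp only [hD] at hDs ⊢
    have hE := Real.exp_pos (ω*s)
    have hR := Real.exp_pos (ω*r)
    have hF := Real.exp_pos (2*ω*T)
    have e1 : Real.exp (-ω*(r-s)) = Real.exp (ω*s)/Real.exp (ω*r) := by
      rw [eq_div_iff hR.ne', ← Real.exp_add]; ring_nf
    have e2 : Real.exp (-ω*(2*T-r-s)) = Real.exp (ω*s)*Real.exp (ω*r)/Real.exp (2*ω*T) := by
      rw [eq_div_iff hF.ne', ← Real.exp_add, ← Real.exp_add]; ring_nf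
    have e3 : Real.exp (-2*ω*(T-s)) = Real.exp (ω*s)^2/Real.exp (2*ω*T) := by
      rw [eq_div_iff hF.ne', sq, mul_assoc, ← Real.exp_add, ← Real.exp_add]; ring_nf
    have e4 : Real.exp (ω*(2*T-r)) = Real.exp (2*ω*T)/Real.exp (ω*r) := by
      rw [eq_div_iff hR.ne', ← Real.exp_add]; ring_nf
    rw [e3] at hDs
    rw [hc, e1, e2, e3, e4]
    have hDs' := hDs.ne'
    rw [div_mul_div_comm, ← sq]
    rw [div_eq_div_iff (by positivity) (by positivity)]
    field_simp
    ring
  have hcont : ContinuousOn (fun s => Real.exp (G s) * f₁ s r) (Set.uIcc t r) := by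
    have hDc : Continuous D := by
      simp only [hD]; fun_prop
    have hDne : ∀ s ∈ Set.uIcc t r, D s ≠ 0 := fun s hs =>
      ne_of_gt (hDpos s (le_trans (hmem s hs).2 hrT))
    have hGc : ContinuousOn G (Set.uIcc t r) := by
      have : ContinuousOn (fun s => ω * s - Real.log (D s)) (Set.uIcc t r) :=
        ((continuous_const.mul continuous_id).continuousOn).sub
          (hDc.continuousOn.log hDne)
      exact this.congr (fun s _ => by rw [hG])
    have hf₁c : ContinuousOn (fun s => f₁ s r) (Set.uIcc t r) := by
      have : ContinuousOn (fun s => ω * (Real.exp (-ω * (r - s)) -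
          u * Real.exp (-ω * (2 * T - r - s))) / D s) (Set.uIcc t r) := by
        apply ContinuousOn.div _ hDc.continuousOn hDne
        fun_prop
      exact this.congr (fun s _ => by rw [hf₁])
    exact (Real.continuous_exp.comp_continuousOn hGc).mul hf₁c
  have := intervalIntegral.integral_eq_sub_of_hasDerivAt hderiv
    (hcont.intervalIntegrable)
  rw [this]
  simp only [hD, hc]
  ring
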